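/- Let S be a left stable semigroup (for all a, b ∈ S, a ∈ S¹ab implies ab ∈ S¹a) which is also right stable (dually). Then the intersection of the natural conjugacy ∼ₙ with the natural (Mitsch) partial order ≤ is the identity relation: if a ∼ₙ b and a ≤ b then a = b. -/

import Mathlib

/-- Natural conjugacy. -/
def NatConj {S : Type*} [Semigroup S] (a b : S) : Prop :=
  ∃ g h : WithOne S,
    (a : WithOne S) * g = g * (b : WithOne S) ∧
    (b : WithOne S) * h = h * (a : WithOne S) ∧
    h * (a : WithOne S) * g = (b : WithOne S) ∧
    g * (b : WithOne S) * h = (a : WithOne S)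

/-- The Mitsch natural partial order: `a ≤ b` iff `∃ s t ∈ S¹, sa = a = sb ∧ at = a = bt`. -/
def MitschLe {S : Type*} [Semigroup S] (a b : S) : Prop :=
  ∃ s t : WithOne S,
    s * (a : WithOne S) = (a : WithOne S) ∧
    s * (b : WithOne S) = (a : WithOne S) ∧
    (a : WithOne S) * t = (a : WithOne S) ∧
    (b : WithOne S) * t = (a : WithOne S)

/-- In a stable semigroup, ∼ₙ ∩ ≤ is the identity relation. -/
theorem natConj_inter_mitschLe_eq_id_of_stable {S : Type*} [Semigroup S]
    (hleft : ∀ a b : S,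
      (∃ x : WithOne S, x * ((a * b : S) : WithOne S) = (a : WithOne S)) →
      ∃ y : WithOne S, y * (a : WithOne S) = ((a * b : S) : WithOne S))
    (hright : ∀ a b : S,
      (∃ x : WithOne S, ((b * a : S) : WithOne S) * x = (a : WithOne S)) →
      ∃ y : WithOne S, (a : WithOne S) * y = ((b * a : S) : WithOne S))
    (a b : S) (hc : NatConj a b) (hle : MitschLe a b) : a = b := by
  obtain ⟨g, h, h1, h2, h3, h4⟩ := hc
  obtain ⟨s, t, m1, m2, m3, m4⟩ := hle
  induction g using WithOne.recOneCoe with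
  | one =>
    -- a * 1 = 1 * b gives a = b
    have : (a : WithOne S) = (b : WithOne S) := by simpa using h1
    exact WithOne.coe_inj.mp this
  | coe g' =>
    have key : (s * h) * ((a * g' : S) : WithOne S) = (a : WithOne S) := by
      push_cast
      calc s * h * ((a : WithOne S) * (g' : WithOne S))
          = s * (h * (a : WithOne S) * (g' : WithOne S)) := by
            simp [mul_assoc]
        _ = s * (b : WithOne S) := by rw [h3]
        _ = (a : WithOne S) := m2
    obtain ⟨y, hy⟩ := hleft a g' ⟨s * h, key⟩
    -- b = h * a * g' = h * y * a
    have hb : (b : WithOne S) = h * y * (a : WithOne S) := by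
      rw [← h3, mul_assoc h y, hy]
      push_cast
      rw [mul_assoc]
    have : (a : WithOne S) = (b : WithOne S) := by
      calc (a : WithOne S) = (b : WithOne S) * t := m4.symm
        _ = h * y * ((a : WithOne S) * t) := by rw [hb, mul_assoc]
        _ = h * y * (a : WithOne S) := by rw [m3]
        _ = (b : WithOne S) := hb.symm
    exact WithOne.coe_inj.mp this
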